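/- arXiv:1907.07396 — 6 statements merged into one kernel-verified Lean document; each statement's English description precedes it below -/
import Mathlib

section
/- For a prime power p and any 1 ≤ k ≤ p-1, the family of affine polynomials f_i·x + f_j over the finite field F_p, evaluated at k fixed distinct nonzero field elements, yields an Euler square of index (p,k): i.e., the p² resulting k-tuples satisfy (a) two tuples from the same row (same leading coefficient, different constants) agree in no coordinate, (b) two tuples from the same column (different leading coefficients, same constant) agree in no coordinate, and (c) any two tuples from different rows and different columns agree in at most one coordinate. -/
/-- Affine polynomials over a finite field of prime power order `p`,
evaluated at `k` fixed distinct nonzero points, yield an Euler square of index `(p,k)`. -/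
theorem euler_square_from_affine_polynomials
    (p k : ℕ) (hp : IsPrimePow p)
    (F : Type*) [Field F] [Fintype F] [DecidableEq F] (hF : Fintype.card F = p)
    (hk1 : 1 ≤ k) (hk2 : k ≤ p - 1)
    (S : Fin k → F) (hinj : Function.Injective S) (hS0 : ∀ i, S i ≠ 0) :
    -- (a) same row (same leading coefficient, different constants): no agreement
    (∀ (a b b' : F), b ≠ b' → ∀ i, a * S i + b ≠ a * S i + b') ∧
    -- (b) same column (different leading coefficients, same constant): no agreement
    (∀ (a a' b : F), a ≠ a' → ∀ i, a * S i + b ≠ a' * S i + b) ∧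
    -- (c) different rows and columns: at most one agreement
    (∀ (a a' b b' : F), a ≠ a' → b ≠ b' →
      (Finset.univ.filter (fun i : Fin k => a * S i + b = a' * S i + b')).card ≤ 1) := by
  refine ⟨?_, ?_, ?_⟩
  · intro a b b' hbb i h
    exact hbb (add_left_cancel h)
  · intro a a' b haa i h
    exact haa (mul_right_cancel₀ (hS0 i) (add_right_cancel h))
  · intro a a' b b' haa hbb
    apply Finset.card_le_one.mpr
    intro i hi j hj
    simp only [Finset.mem_filter] at hi hj
    apply hinj
    have h1 : (a - a') * S i = b' - b := by ring_nf; linear_combination hi.2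
    have h2 : (a - a') * S j = b' - b := by ring_nf; linear_combination hj.2
    have := h1.trans h2.symm
    exact mul_left_cancel₀ (sub_ne_zero_of_ne haa) this
end

section
/- Let Φ be an m × M real matrix with unit-norm columns and coherence μ. Then for every k-sparse unit vector x, (1 - (k-1)μ)‖x‖² ≤ ‖Φx‖² ≤ (1 + (k-1)μ)‖x‖²; i.e., Φ satisfies the restricted isometry property of order k with constant δ_k = (k-1)μ. -/
/-- A matrix with unit-norm columns and coherence `μ` satisfies the
restricted isometry property of order `k` with constant `δ_k = (k-1)μ`. -/
theorem rip_from_coherence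
    (m M k : ℕ) (Φ : Matrix (Fin m) (Fin M) ℝ)
    (hunit : ∀ j, ∑ i, Φ i j ^ 2 = 1)
    (μ : ℝ) (hμ0 : 0 ≤ μ)
    (hμ : ∀ j j' : Fin M, j ≠ j' → |∑ i, Φ i j * Φ i j'| ≤ μ)
    (x : Fin M → ℝ)
    (hx : (Finset.univ.filter (fun j => x j ≠ 0)).card ≤ k) :
    (1 - ((k : ℝ) - 1) * μ) * (∑ j, x j ^ 2) ≤ ∑ i, (Φ.mulVec x i) ^ 2 ∧
      ∑ i, (Φ.mulVec x i) ^ 2 ≤ (1 + ((k : ℝ) - 1) * μ) * (∑ j, x j ^ 2) := by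
  classical
  set S : Finset (Fin M) := Finset.univ.filter (fun j => x j ≠ 0) with hSdef
  set A : ℝ := ∑ j, x j ^ 2 with hA
  set T : ℝ := ∑ j, |x j| with hT
  -- expansion of the quadratic form
  have hexp : ∑ i, (Φ.mulVec x i) ^ 2
      = ∑ j, ∑ j', x j * x j' * (∑ i, Φ i j * Φ i j') := by
    simp only [Matrix.mulVec, dotProduct, sq, Finset.sum_mul_sum,
      Finset.mul_sum, Finset.sum_mul]
    rw [Finset.sum_comm]
    refine Finset.sum_congr rfl fun j _ => ?_
    rw [Finset.sum_comm]
    refine Finset.sum_congr rfl fun j' _ => ?_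
    exact Finset.sum_congr rfl fun i _ => by ring
  set E : ℝ := ∑ j, ∑ j' ∈ Finset.univ.erase j, x j * x j' * (∑ i, Φ i j * Φ i j')
    with hE
  have hsplit : ∑ i, (Φ.mulVec x i) ^ 2 = A + E := by
    rw [hexp, hA, hE, ← Finset.sum_add_distrib]
    refine Finset.sum_congr rfl fun j _ => ?_
    rw [← Finset.add_sum_erase _ _ (Finset.mem_univ j)]
    congr 1
    have : ∑ i, Φ i j * Φ i j = 1 := by
      simpa [sq] using hunit j
    rw [this]; ring
  -- support facts
  have hTA : T ^ 2 ≤ (k : ℝ) * A := by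
    have h1 : T = ∑ j ∈ S, |x j| := by
      rw [hT, ← Finset.sum_filter_ne_zero Finset.univ (f := fun j => |x j|)]
      refine Finset.sum_congr ?_ fun _ _ => rfl
      simp [hSdef, abs_ne_zero]
    have h2 : A = ∑ j ∈ S, x j ^ 2 := by
      rw [hA, ← Finset.sum_filter_ne_zero Finset.univ (f := fun j => x j ^ 2)]
      refine Finset.sum_congr ?_ fun _ _ => rfl
      simp [hSdef, pow_eq_zero_iff]
    have hcs : (∑ j ∈ S, |x j|) ^ 2 ≤ (S.card : ℝ) * ∑ j ∈ S, |x j| ^ 2 := by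
      exact_mod_cast sq_sum_le_card_mul_sum_sq (s := S) (f := fun j => |x j|)
    have hk : (S.card : ℝ) ≤ (k : ℝ) := by exact_mod_cast hx
    have hA0 : 0 ≤ ∑ j ∈ S, x j ^ 2 := Finset.sum_nonneg fun _ _ => sq_nonneg _
    calc T ^ 2 = (∑ j ∈ S, |x j|) ^ 2 := by rw [h1]
      _ ≤ (S.card : ℝ) * ∑ j ∈ S, |x j| ^ 2 := hcs
      _ = (S.card : ℝ) * ∑ j ∈ S, x j ^ 2 := by simp [sq_abs]
      _ ≤ (k : ℝ) * A := by rw [h2]; exact mul_le_mul_of_nonneg_right hk hA0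
  -- bound the off-diagonal term
  have hEbound : |E| ≤ μ * (T ^ 2 - A) := by
    have step : |E| ≤ ∑ j, ∑ j' ∈ Finset.univ.erase j, |x j| * |x j'| * μ := by
      refine (Finset.abs_sum_le_sum_abs _ _).trans ?_
      refine Finset.sum_le_sum fun j _ => ?_
      refine (Finset.abs_sum_le_sum_abs _ _).trans ?_
      refine Finset.sum_le_sum fun j' hj' => ?_
      have hne : j' ≠ j := Finset.ne_of_mem_erase hj'
      rw [abs_mul, abs_mul]
      exact mul_le_mul_of_nonneg_left (hμ j j' (Ne.symm hne))
        (by positivity)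
    refine step.trans_eq ?_
    have : ∀ j : Fin M, ∑ j' ∈ Finset.univ.erase j, |x j| * |x j'| * μ
        = μ * (|x j| * (T - |x j|)) := by
      intro j
      rw [Finset.sum_erase_eq_sub (Finset.mem_univ j)
        (f := fun j' => |x j| * |x j'| * μ)]
      rw [← Finset.sum_mul, ← Finset.mul_sum, ← hT]
      ring
    rw [Finset.sum_congr rfl fun j _ => this j, ← Finset.mul_sum]
    congr 1
    have : ∑ j, |x j| * (T - |x j|) = T * T - ∑ j, |x j| * |x j| := by
      simp only [mul_sub]
      rw [Finset.sum_sub_distrib, ← Finset.sum_mul, ← hT]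
    rw [this]
    have : ∑ j, |x j| * |x j| = A := by
      simp [hA, ← sq, sq_abs]
    rw [this]; ring
  have hE2 : |E| ≤ ((k : ℝ) - 1) * μ * A := by
    refine hEbound.trans ?_
    have hA0 : 0 ≤ A := Finset.sum_nonneg fun _ _ => sq_nonneg _
    have : T ^ 2 - A ≤ (k : ℝ) * A - A := by linarith
    nlinarith [mul_le_mul_of_nonneg_left this hμ0]
  rw [hsplit]
  have h1 := abs_le.mp hE2
  constructor <;> nlinarith [h1.1, h1.2]
end

section
/- Let p' ≥ p'' be prime powers, t < k < p''. Given a GES(p',k,t) with entry array c' and a GES(p'',k,t) with entry array c'', define c_{m_1,…,m_{t+1},r} = c'_{i_1,…,i_{t+1},r} + p'·(c''_{j_1,…,j_{t+1},r} − 1) where m_s = i_s + p'(j_s − 1). Then c is a GES(p'p'',k,t): entries lie in {0,…,p'p''−1}, tuples whose (t+1)-dimensional indices differ in one coordinate agree in no position, and any two distinct tuples agree in at most t positions. -/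
/-- Two index tuples differ in exactly one coordinate. -/
def DiffersInOne {n t : ℕ} (i i' : Fin (t + 1) → Fin n) : Prop :=
  ∃ s, i s ≠ i' s ∧ ∀ s', s' ≠ s → i s' = i' s'

/-- A Generalized Euler Square GES(n,k,t). -/
def IsGES (n k t : ℕ) {α : Type*} [DecidableEq α]
    (A : (Fin (t + 1) → Fin n) → Fin k → α) : Prop :=
  (∀ i i', DiffersInOne i i' → ∀ r, A i r ≠ A i' r) ∧
  (∀ i i', i ≠ i' → ¬DiffersInOne i i' →
    (Finset.univ.filter (fun r => A i r = A i' r)).card ≤ t)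

/-- First component `i_s` of a combined index `m_s = i_s + p'·j_s` (0-based). -/
def fstIdx (p' p'' : ℕ) (hp' : 0 < p') (m : Fin (p' * p'')) : Fin p' :=
  ⟨(m : ℕ) % p', Nat.mod_lt _ hp'⟩

/-- Second component `j_s` of a combined index. -/
def sndIdx (p' p'' : ℕ) (hp' : 0 < p') (m : Fin (p' * p'')) : Fin p'' :=
  ⟨(m : ℕ) / p', Nat.div_lt_of_lt_mul m.isLt⟩

/-- The combined entry `c' + p'·c''` (0-based version of `c' + p'(c'' − 1)`). -/
def combineVal (p' p'' : ℕ) (a : Fin p') (b : Fin p'') : Fin (p' * p'') :=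
  ⟨(a : ℕ) + p' * (b : ℕ), by
    have ha := a.isLt
    have hb := b.isLt
    calc (a : ℕ) + p' * (b : ℕ) < p' + p' * (b : ℕ) := by omega
      _ = p' * ((b : ℕ) + 1) := by ring
      _ ≤ p' * p'' := Nat.mul_le_mul_left _ hb⟩

lemma combineVal_inj {p' p'' : ℕ} {a a' : Fin p'} {b b' : Fin p''}
    (h : combineVal p' p'' a b = combineVal p' p'' a' b') : a = a' ∧ b = b' := by
  have h' : (a : ℕ) + p' * (b : ℕ) = (a' : ℕ) + p' * (b' : ℕ) := congrArg Fin.val h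
  have ha := a.isLt
  have ha' := a'.isLt
  have hmod : ((a : ℕ) + p' * (b : ℕ)) % p' = ((a' : ℕ) + p' * (b' : ℕ)) % p' := by
    rw [h']
  rw [Nat.add_mul_mod_self_left, Nat.add_mul_mod_self_left,
    Nat.mod_eq_of_lt ha, Nat.mod_eq_of_lt ha'] at hmod
  have hb : (b : ℕ) = (b' : ℕ) := by
    have : p' * (b : ℕ) = p' * (b' : ℕ) := by omega
    exact Nat.eq_of_mul_eq_mul_left (by omega) this
  exact ⟨Fin.ext hmod, Fin.ext hb⟩

lemma idx_eq {p' p'' : ℕ} (hp'0 : 0 < p') {m m' : Fin (p' * p'')}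
    (h1 : fstIdx p' p'' hp'0 m = fstIdx p' p'' hp'0 m')
    (h2 : sndIdx p' p'' hp'0 m = sndIdx p' p'' hp'0 m') : m = m' := by
  have h1' : (m : ℕ) % p' = (m' : ℕ) % p' := congrArg Fin.val h1
  have h2' : (m : ℕ) / p' = (m' : ℕ) / p' := congrArg Fin.val h2
  apply Fin.ext
  calc (m : ℕ) = p' * ((m : ℕ) / p') + (m : ℕ) % p' := (Nat.div_add_mod _ _).symm
    _ = p' * ((m' : ℕ) / p') + (m' : ℕ) % p' := by rw [h1', h2']
    _ = (m' : ℕ) := Nat.div_add_mod _ _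

/-- composing a GES(p',k,t) and a GES(p'',k,t) via
`c = c' + p'·c''` (on combined indices `m_s = i_s + p'·j_s`) yields a GES(p'p'',k,t). -/
theorem ges_composition
    (p' p'' k t : ℕ) (hp' : IsPrimePow p') (hp'' : IsPrimePow p'')
    (hp'0 : 0 < p') (hle : p'' ≤ p') (ht : t < k) (hk : k < p'')
    (c' : (Fin (t + 1) → Fin p') → Fin k → Fin p') (hc' : IsGES p' k t c')
    (c'' : (Fin (t + 1) → Fin p'') → Fin k → Fin p'') (hc'' : IsGES p'' k t c'') :
    IsGES (p' * p'') k t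
      (fun idx r =>
        combineVal p' p''
          (c' (fun s => fstIdx p' p'' hp'0 (idx s)) r)
          (c'' (fun s => sndIdx p' p'' hp'0 (idx s)) r)) := by
  set F : (Fin (t + 1) → Fin (p' * p'')) → Fin (t + 1) → Fin p' :=
    fun idx s => fstIdx p' p'' hp'0 (idx s) with hF
  set G : (Fin (t + 1) → Fin (p' * p'')) → Fin (t + 1) → Fin p'' :=
    fun idx s => sndIdx p' p'' hp'0 (idx s) with hG
  constructor
  · rintro i i' ⟨s, hs, hother⟩ r h
    obtain ⟨h1, h2⟩ := combineVal_inj h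
    by_cases hFs : F i s = F i' s
    · -- then G differs in one coordinate
      have hGs : G i s ≠ G i' s := by
        intro hGs
        exact hs (idx_eq hp'0 hFs hGs)
      have : DiffersInOne (G i) (G i') :=
        ⟨s, hGs, fun s' hs' => by simp [hG, hother s' hs']⟩
      exact hc''.1 _ _ this r h2
    · have : DiffersInOne (F i) (F i') :=
        ⟨s, hFs, fun s' hs' => by simp [hF, hother s' hs']⟩
      exact hc'.1 _ _ this r h1
  · intro i i' hne hnd
    by_cases hFe : F i = F i'
    · -- G i ≠ G i'
      have hGe : G i ≠ G i' := by
        intro hGe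
        apply hne
        funext s
        exact idx_eq hp'0 (congrFun hFe s) (congrFun hGe s)
      have hsub : (Finset.univ.filter (fun r =>
          combineVal p' p'' (c' (F i) r) (c'' (G i) r)
            = combineVal p' p'' (c' (F i') r) (c'' (G i') r))) ⊆
          (Finset.univ.filter (fun r => c'' (G i) r = c'' (G i') r)) := by
        intro r hr
        simp only [Finset.mem_filter, Finset.mem_univ, true_and] at hr ⊢
        exact (combineVal_inj hr).2
      by_cases hd : DiffersInOne (G i) (G i')
      · have hempty : (Finset.univ.filter (fun r => c'' (G i) r = c'' (G i') r)) = ∅ := by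
          apply Finset.filter_false_of_mem
          intro r _
          exact hc''.1 _ _ hd r
        have hcard := Finset.card_le_card hsub
        rw [hempty, Finset.card_empty] at hcard
        exact le_trans hcard (Nat.zero_le t)
      · exact le_trans (Finset.card_le_card hsub) (hc''.2 _ _ hGe hd)
    · have hsub : (Finset.univ.filter (fun r =>
          combineVal p' p'' (c' (F i) r) (c'' (G i) r)
            = combineVal p' p'' (c' (F i') r) (c'' (G i') r))) ⊆
          (Finset.univ.filter (fun r => c' (F i) r = c' (F i') r)) := by
        intro r hr
        simp only [Finset.mem_filter, Finset.mem_univ, true_and] at hr ⊢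
        exact (combineVal_inj hr).1
      by_cases hd : DiffersInOne (F i) (F i')
      · have hempty : (Finset.univ.filter (fun r => c' (F i) r = c' (F i') r)) = ∅ := by
          apply Finset.filter_false_of_mem
          intro r _
          exact hc'.1 _ _ hd r
        have hcard := Finset.card_le_card hsub
        rw [hempty, Finset.card_empty] at hcard
        exact le_trans hcard (Nat.zero_le t)
      · exact le_trans (Finset.card_le_card hsub) (hc'.2 _ _ hFe hd)
end

section
/- If a GES(n,k,t) exists, then there exists a binary matrix of size nk × n^{t+1} in which every column has exactly k ones, exactly one 1 in each of the k consecutive blocks of n rows, and any two distinct columns overlap (share a common 1) in at most t positions; consequently after normalizing columns by 1/√k its coherence is at most t/k. -/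
/-- The row index `(l-1)·n + t_l + 1` (0-based: `l·n + i`) inside the `l`-th block. -/
def blockRow (n k : ℕ) (l : Fin k) (i : Fin n) : Fin (n * k) :=
  ⟨(l : ℕ) * n + (i : ℕ), by
    have h1 := l.isLt
    have h2 := i.isLt
    calc (l : ℕ) * n + (i : ℕ) < (l : ℕ) * n + n := by omega
      _ = ((l : ℕ) + 1) * n := by ring
      _ ≤ k * n := Nat.mul_le_mul_right n h1
      _ = n * k := Nat.mul_comm _ _⟩

/-- From a GES(n,k,t) one obtains an `nk × n^(t+1)` binary matrix whose
columns have exactly `k` ones, exactly one `1` in each of the `k` blocks of `n` rows,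
pairwise overlap at most `t`, and hence normalized coherence at most `t/k`. -/
theorem binary_matrix_from_ges
    (n k t : ℕ) (hk : 0 < k)
    (hGES : ∃ A : (Fin (t + 1) → Fin n) → Fin k → Fin n, IsGES n k t A) :
    ∃ Φ : (Fin (t + 1) → Fin n) → Fin (n * k) → ℝ,
      (∀ j i, Φ j i = 0 ∨ Φ j i = 1) ∧
      (∀ j, (Finset.univ.filter (fun i => Φ j i = 1)).card = k) ∧
      (∀ j (l : Fin k), ∃! i : Fin n, Φ j (blockRow n k l i) = 1) ∧
      (∀ j j', j ≠ j' →
        (Finset.univ.filter (fun i => Φ j i = 1 ∧ Φ j' i = 1)).card ≤ t) ∧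
      (∀ j j', j ≠ j' →
        |∑ i, (1 / Real.sqrt k * Φ j i) * (1 / Real.sqrt k * Φ j' i)| ≤ (t : ℝ) / k) := by
  obtain ⟨A, hA1, hA2⟩ := hGES
  rcases Nat.eq_zero_or_pos n with hn | hn
  · subst hn
    exact ⟨fun _ _ => 0, fun j => (j 0).elim0, fun j => (j 0).elim0,
      fun j => (j 0).elim0, fun j _ hne => ((j 0).elim0), fun j _ hne => ((j 0).elim0)⟩
  have hidx : ∀ r : Fin (n * k), (r : ℕ) / n < k := by
    intro r
    rw [Nat.div_lt_iff_lt_mul hn, mul_comm k n]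
    exact r.isLt
  set Φ : (Fin (t + 1) → Fin n) → Fin (n * k) → ℝ := fun j r =>
    if A j ⟨(r : ℕ) / n, hidx r⟩ = ⟨(r : ℕ) % n, Nat.mod_lt _ hn⟩ then 1 else 0 with hΦ
  have hbin : ∀ j i, Φ j i = 0 ∨ Φ j i = 1 := by
    intro j i
    simp only [hΦ]
    split <;> simp
  have hone : ∀ j r, Φ j r = 1 ↔
      A j ⟨(r : ℕ) / n, hidx r⟩ = ⟨(r : ℕ) % n, Nat.mod_lt _ hn⟩ := by
    intro j r
    simp only [hΦ]
    split <;> simp_all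
  have hbr_div : ∀ (l : Fin k) (x : Fin n), ((blockRow n k l x : ℕ)) / n = l := by
    intro l x
    show ((l : ℕ) * n + (x : ℕ)) / n = l
    rw [mul_comm, Nat.mul_add_div hn, Nat.div_eq_of_lt x.isLt, add_zero]
  have hbr_mod : ∀ (l : Fin k) (x : Fin n), ((blockRow n k l x : ℕ)) % n = x := by
    intro l x
    show ((l : ℕ) * n + (x : ℕ)) % n = x
    rw [mul_comm, Nat.mul_add_mod, Nat.mod_eq_of_lt x.isLt]
  have hrec : ∀ r : Fin (n * k),
      blockRow n k ⟨(r : ℕ) / n, hidx r⟩ ⟨(r : ℕ) % n, Nat.mod_lt _ hn⟩ = r := by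
    intro r
    apply Fin.ext
    show ((r : ℕ) / n) * n + (r : ℕ) % n = r
    rw [mul_comm]
    exact Nat.div_add_mod _ _
  have key : ∀ j (l : Fin k) (x : Fin n), Φ j (blockRow n k l x) = 1 ↔ A j l = x := by
    intro j l x
    rw [hone]
    have h2 : (⟨((blockRow n k l x : Fin (n * k)) : ℕ) / n, hidx _⟩ : Fin k) = l :=
      Fin.ext (hbr_div l x)
    have h3 : (⟨((blockRow n k l x : Fin (n * k)) : ℕ) % n, Nat.mod_lt _ hn⟩ : Fin n) = x :=
      Fin.ext (hbr_mod l x)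
    rw [h2, h3]
  have hfilt : ∀ j, (Finset.univ.filter (fun i => Φ j i = 1)) =
      Finset.image (fun l : Fin k => blockRow n k l (A j l)) Finset.univ := by
    intro j
    ext r
    simp only [Finset.mem_filter, Finset.mem_univ, true_and, Finset.mem_image]
    constructor
    · intro h
      refine ⟨⟨(r : ℕ) / n, hidx r⟩, ?_⟩
      rw [(hone j r).1 h]
      exact hrec r
    · rintro ⟨l, rfl⟩
      exact (key j l (A j l)).2 rfl
  have hinj : ∀ j, Function.Injective (fun l : Fin k => blockRow n k l (A j l)) := by
    intro j l l' h
    have := congrArg (fun r : Fin (n * k) => ((r : ℕ) / n)) h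
    simp only [hbr_div] at this
    exact Fin.ext this
  have hcard : ∀ j, (Finset.univ.filter (fun i => Φ j i = 1)).card = k := by
    intro j
    rw [hfilt j, Finset.card_image_of_injective _ (hinj j), Finset.card_univ, Fintype.card_fin]
  have hoverlap : ∀ j j', j ≠ j' →
      (Finset.univ.filter (fun i => Φ j i = 1 ∧ Φ j' i = 1)).card ≤ t := by
    intro j j' hne
    have hmatch : ((Finset.univ : Finset (Fin k)).filter (fun r => A j r = A j' r)).card ≤ t := by
      by_cases hd : DiffersInOne j j'
      · have hempty : ((Finset.univ : Finset (Fin k)).filter (fun r => A j r = A j' r)) = ∅ := by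
          rw [Finset.filter_eq_empty_iff]
          exact fun r _ => hA1 j j' hd r
        simp [hempty]
      · exact hA2 j j' hne hd
    refine le_trans (Finset.card_le_card_of_injOn
      (fun r => (⟨(r : ℕ) / n, hidx r⟩ : Fin k)) ?_ ?_) hmatch
    · intro r hr
      simp only [Finset.mem_coe, Finset.mem_filter, Finset.mem_univ, true_and] at hr ⊢
      rw [(hone j r).1 hr.1, ← (hone j' r).1 hr.2]
    · intro r hr r' hr' hrr
      simp only [Finset.coe_filter, Set.mem_setOf_eq] at hr hr'
      have e1 : r = blockRow n k ⟨(r : ℕ) / n, hidx r⟩ ⟨(r : ℕ) % n, Nat.mod_lt _ hn⟩ :=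
        (hrec r).symm
      have e2 : r' = blockRow n k ⟨(r' : ℕ) / n, hidx r'⟩ ⟨(r' : ℕ) % n, Nat.mod_lt _ hn⟩ :=
        (hrec r').symm
      rw [e1, e2]
      have m1 : (⟨(r : ℕ) % n, Nat.mod_lt _ hn⟩ : Fin n) = A j ⟨(r : ℕ) / n, hidx r⟩ :=
        ((hone j r).1 hr.2.1).symm
      have m2 : (⟨(r' : ℕ) % n, Nat.mod_lt _ hn⟩ : Fin n) = A j ⟨(r' : ℕ) / n, hidx r'⟩ :=
        ((hone j r').1 hr'.2.1).symm
      rw [m1, m2, show (⟨(r : ℕ) / n, hidx r⟩ : Fin k) = ⟨(r' : ℕ) / n, hidx r'⟩ from hrr]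
  refine ⟨Φ, hbin, hcard, ?_, hoverlap, ?_⟩
  · intro j l
    exact ⟨A j l, (key j l (A j l)).2 rfl, fun y hy => ((key j l y).1 hy).symm⟩
  · intro j j' hne
    have hk0 : (0 : ℝ) < (k : ℝ) := by exact_mod_cast hk
    have hterm : ∀ i, (1 / Real.sqrt k * Φ j i) * (1 / Real.sqrt k * Φ j' i)
        = (1 / (k : ℝ)) * (if Φ j i = 1 ∧ Φ j' i = 1 then 1 else 0) := by
      intro i
      rcases hbin j i with h1 | h1 <;> rcases hbin j' i with h2 | h2 <;>
        simp [h1, h2, ← mul_inv, Real.mul_self_sqrt hk0.le]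
    rw [Finset.sum_congr rfl (fun i _ => hterm i), ← Finset.mul_sum, Finset.sum_boole]
    rw [abs_of_nonneg (by positivity), one_div, inv_mul_eq_div]
    have := hoverlap j j' hne
    gcongr
end

section
/- Let p be prime power, k = p−1, and d | p with d ≤ p−1. The normalized Euler-square matrix (1/√k)Φ(p,k,1) of size pk × p², partitioned into p²/d orthonormal column blocks of width d (each block consisting of d columns from the same column of the Euler square array), has block coherence exactly 1/k: for blocks ℓ ≠ q from the same array column the cross-Gram is zero; from the same array row it is (1/k)(J − I) with top eigenvalue (d−1)/k; otherwise it is (1/k)J with top eigenvalue d/k; hence μ_B = (1/d)·max singular value over cross blocks = 1/k. -/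
/-- Indicator column in `{0,1}^(p·k)` of a `k`-tuple with entries in `Fin p`:
the entry at row `l·p + tup l` of the `l`-th block equals 1. -/
def indicCol (p k : ℕ) (tup : Fin k → Fin p) : Fin (p * k) → ℝ :=
  fun idx =>
    ((Finset.univ.filter
      (fun l : Fin k => (idx : ℕ) = (l : ℕ) * p + ((tup l : ℕ)))).card : ℝ)

/-- The row of the Euler square array used for column `j` of group `g`
(groups of `d` consecutive rows, `d ∣ p`). -/
def rowIdx (p d : ℕ) (hdvd : d ∣ p) (g : Fin (p / d)) (j : Fin d) : Fin p :=
  ⟨(g : ℕ) * d + (j : ℕ), by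
    have hg := g.isLt
    have hj := j.isLt
    calc (g : ℕ) * d + (j : ℕ) < (g : ℕ) * d + d := by omega
      _ = ((g : ℕ) + 1) * d := by ring
      _ ≤ (p / d) * d := Nat.mul_le_mul_right d hg
      _ = p := Nat.div_mul_cancel hdvd⟩

/-- Column of the Euler-square matrix indexed by (array column `c`, group `g`,
position `j` within the group). -/
def esCol (p d k : ℕ) (hdvd : d ∣ p) (T : Fin p → Fin p → Fin k → Fin p)
    (c : Fin p) (g : Fin (p / d)) (j : Fin d) : Fin (p * k) → ℝ :=
  indicCol p k (T (rowIdx p d hdvd g j) c)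

/-- Cross-Gram matrix `(1/k)·Φ[b]ᵀΦ[b']` between two width-`d` column blocks
`b = (c, g)` and `b' = (c', g')` of the normalized Euler-square matrix. -/
noncomputable def esGram (p d k : ℕ) (hdvd : d ∣ p) (T : Fin p → Fin p → Fin k → Fin p)
    (b b' : Fin p × Fin (p / d)) : Matrix (Fin d) (Fin d) ℝ :=
  Matrix.of fun j j' =>
    (1 / (k : ℝ)) *
      ∑ idx, esCol p d k hdvd T b.1 b.2 j idx * esCol p d k hdvd T b'.1 b'.2 j' idx

lemma decompUnique {p a b x y : ℕ} (hx : x < p) (hy : y < p)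
    (h : a * p + x = b * p + y) : a = b ∧ x = y := by
  have hp : 0 < p := lt_of_le_of_lt (Nat.zero_le x) hx
  have ha : (a * p + x) / p = a := by
    rw [add_comm, Nat.add_mul_div_right _ _ hp, Nat.div_eq_of_lt hx, Nat.zero_add]
  have hb : (b * p + y) / p = b := by
    rw [add_comm, Nat.add_mul_div_right _ _ hp, Nat.div_eq_of_lt hy, Nat.zero_add]
  have hab : a = b := by rw [← ha, ← hb, h]
  refine ⟨hab, ?_⟩
  subst hab
  exact Nat.add_left_cancel h

def idxEquiv (p k : ℕ) (hp : 0 < p) : Fin k × Fin p ≃ Fin (p * k) where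
  toFun x := ⟨(x.1 : ℕ) * p + (x.2 : ℕ), by
    have h1 := x.1.isLt; have h2 := x.2.isLt
    calc (x.1 : ℕ) * p + (x.2 : ℕ) < ((x.1 : ℕ) + 1) * p := by
          rw [add_mul, one_mul]; omega
      _ ≤ k * p := Nat.mul_le_mul_right p h1
      _ = p * k := Nat.mul_comm k p⟩
  invFun idx := (⟨(idx : ℕ) / p, by
      have := idx.isLt
      exact Nat.div_lt_of_lt_mul (by omega)⟩,
    ⟨(idx : ℕ) % p, Nat.mod_lt _ hp⟩)
  left_inv := by
    rintro ⟨l, r⟩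
    simp only [Prod.mk.injEq]
    constructor
    · ext
      simp only
      rw [add_comm, Nat.add_mul_div_right _ _ hp, Nat.div_eq_of_lt r.isLt, Nat.zero_add]
    · ext
      simp only
      rw [add_comm, Nat.add_mul_mod_self_right, Nat.mod_eq_of_lt r.isLt]
  right_inv := by
    intro idx
    ext
    simp only
    rw [Nat.mul_comm, Nat.div_add_mod]

lemma indicCol_apply (p k : ℕ) (hp : 0 < p) (t : Fin k → Fin p) (l : Fin k) (r : Fin p) :
    indicCol p k t (idxEquiv p k hp (l, r)) = if r = t l then 1 else 0 := by
  unfold indicCol idxEquiv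
  simp only [Equiv.coe_fn_mk]
  by_cases hr : r = t l
  · have : (Finset.univ.filter
        (fun l' : Fin k => (l : ℕ) * p + (r : ℕ) = (l' : ℕ) * p + ((t l' : ℕ)))) = {l} := by
      ext l'
      simp only [Finset.mem_filter, Finset.mem_univ, true_and, Finset.mem_singleton]
      constructor
      · intro h
        obtain ⟨h1, _⟩ := decompUnique r.isLt (t l').isLt h
        exact (Fin.ext h1).symm
      · rintro rfl; rw [hr]
    rw [this]
    simp [hr]
  · have : (Finset.univ.filter
        (fun l' : Fin k => (l : ℕ) * p + (r : ℕ) = (l' : ℕ) * p + ((t l' : ℕ)))) = ∅ := by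
      ext l'
      simp only [Finset.mem_filter, Finset.mem_univ, true_and, Finset.notMem_empty,
        iff_false]
      intro h
      obtain ⟨h1, h2⟩ := decompUnique r.isLt (t l').isLt h
      have : l = l' := Fin.ext h1
      exact hr (by subst this; exact Fin.ext h2)
    rw [this]
    simp [hr]

lemma sum_indic (p k : ℕ) (hp : 0 < p) (t t' : Fin k → Fin p) :
    ∑ idx : Fin (p * k), indicCol p k t idx * indicCol p k t' idx
      = ((Finset.univ.filter (fun i : Fin k => t i = t' i)).card : ℝ) := by
  rw [← Equiv.sum_comp (idxEquiv p k hp)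
    (fun idx => indicCol p k t idx * indicCol p k t' idx)]
  rw [Fintype.sum_prod_type]
  have : ∀ l : Fin k, ∑ r : Fin p,
      indicCol p k t (idxEquiv p k hp (l, r)) * indicCol p k t' (idxEquiv p k hp (l, r))
      = if t l = t' l then (1 : ℝ) else 0 := by
    intro l
    simp only [indicCol_apply p k hp, ite_mul, one_mul, zero_mul]
    rw [Finset.sum_ite_eq' Finset.univ (t l) (fun r => if r = t' l then (1:ℝ) else 0)]
    simp [eq_comm]
  rw [Finset.sum_congr rfl (fun l _ => this l)]
  exact Finset.sum_boole _ _

lemma esGram_apply (p d k : ℕ) (hp : 0 < p) (hdvd : d ∣ p)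
    (T : Fin p → Fin p → Fin k → Fin p) (b b' : Fin p × Fin (p / d)) (j j' : Fin d) :
    esGram p d k hdvd T b b' j j'
      = (1 / (k : ℝ)) * ((Finset.univ.filter (fun i : Fin k =>
          T (rowIdx p d hdvd b.2 j) b.1 i = T (rowIdx p d hdvd b'.2 j') b'.1 i)).card : ℝ) := by
  unfold esGram esCol
  simp only [Matrix.of_apply]
  rw [sum_indic p k hp]

lemma rowIdx_injective (p d : ℕ) (hdvd : d ∣ p) {g g' : Fin (p / d)} {j j' : Fin d}
    (h : rowIdx p d hdvd g j = rowIdx p d hdvd g' j') : g = g' ∧ j = j' := by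
  have hv : (g : ℕ) * d + (j : ℕ) = (g' : ℕ) * d + (j' : ℕ) := congrArg Fin.val h
  obtain ⟨h1, h2⟩ := decompUnique j.isLt j'.isLt hv
  exact ⟨Fin.ext h1, Fin.ext h2⟩

lemma sqrt_bound_helper {A c T : ℝ} (hc : 0 ≤ c) (h : A ≤ c ^ 2 * T) :
    Real.sqrt A ≤ c * Real.sqrt T := by
  have h2 : c * Real.sqrt T = Real.sqrt (c ^ 2 * T) := by
    rw [Real.sqrt_mul (sq_nonneg c), Real.sqrt_sq hc]
  rw [h2]; exact Real.sqrt_le_sqrt h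

lemma card_filter_none {k : ℕ} {q : Fin k → Prop} [DecidablePred q] (h : ∀ i, ¬ q i) :
    (Finset.univ.filter q).card = 0 := by
  rw [Finset.card_eq_zero]
  ext i; simp [h i]

lemma card_filter_one {k : ℕ} {q : Fin k → Prop} [DecidablePred q] (h : ∃! i, q i) :
    (Finset.univ.filter q).card = 1 := by
  obtain ⟨i, hi, hun⟩ := h
  rw [Finset.card_eq_one]
  exact ⟨i, by ext i'; simp only [Finset.mem_filter, Finset.mem_univ, true_and,
    Finset.mem_singleton]; exact ⟨fun h' => hun i' h', fun h' => h' ▸ hi⟩⟩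

/-- For `p` a prime power, `k = p − 1`, `d ∣ p`, `d ≤ p − 1`, the
normalized Euler-square matrix `(1/√k)Φ(p,k,1)` (of size `pk × p²`), partitioned into
`p²/d` column blocks of width `d` (each block taking `d` consecutive tuples from one
column of the Euler-square array `T`), has block coherence exactly `1/k`: each block is
orthonormal, cross-Grams of blocks from the same array column vanish, from the same
group of rows they equal `(1/k)(J − I)` (top eigenvalue `(d−1)/k`), otherwise `(1/k)J`
(top eigenvalue `d/k`); hence `(1/d)·max σ_max = (1/d)(d/k) = 1/k`. -/
theorem euler_square_matrix_block_coherence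
    (p d k : ℕ) (hp : IsPrimePow p) (hdvd : d ∣ p) (hd : d ≤ p - 1) (hk : k = p - 1)
    (T : Fin p → Fin p → Fin k → Fin p)
    (hrow : ∀ r c c', c ≠ c' → ∀ i, T r c i ≠ T r c' i)
    (hcol : ∀ r r' c, r ≠ r' → ∀ i, T r c i ≠ T r' c i)
    (hcross : ∀ r r' c c', r ≠ r' → c ≠ c' → ∃! i, T r c i = T r' c' i) :
    -- each block is orthonormal
    (∀ b : Fin p × Fin (p / d), esGram p d k hdvd T b b = 1) ∧
    -- same array column, different groups: cross-Gram is zero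
    (∀ (c : Fin p) (g g' : Fin (p / d)), g ≠ g' →
      esGram p d k hdvd T (c, g) (c, g') = 0) ∧
    -- different array columns, same group: cross-Gram is (1/k)(J − I)
    (∀ (c c' : Fin p) (g : Fin (p / d)), c ≠ c' →
      esGram p d k hdvd T (c, g) (c', g) =
        Matrix.of fun j j' => if j = j' then 0 else 1 / (k : ℝ)) ∧
    -- different array columns and groups: cross-Gram is (1/k)J
    (∀ (c c' : Fin p) (g g' : Fin (p / d)), c ≠ c' → g ≠ g' →
      esGram p d k hdvd T (c, g) (c', g') = Matrix.of fun _ _ => 1 / (k : ℝ)) ∧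
    -- every cross-Gram has largest singular value at most d/k …
    (∀ b b' : Fin p × Fin (p / d), b ≠ b' → ∀ x : Fin d → ℝ,
      Real.sqrt (∑ j, ((esGram p d k hdvd T b b').mulVec x j) ^ 2) ≤
        ((d : ℝ) / k) * Real.sqrt (∑ j, x j ^ 2)) ∧
    -- … and the value d/k is attained, so the block coherence equals (1/d)(d/k) = 1/k
    (∃ b b' : Fin p × Fin (p / d), b ≠ b' ∧ ∃ x : Fin d → ℝ, x ≠ 0 ∧
      (esGram p d k hdvd T b b').mulVec x = ((d : ℝ) / k) • x) := by
  have hp2 : 2 ≤ p := hp.two_le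
  have hp0 : 0 < p := by omega
  have hd0 : 0 < d := Nat.pos_of_dvd_of_pos hdvd hp0
  have hk0 : 0 < k := by omega
  have hkR : (k : ℝ) ≠ 0 := Nat.cast_ne_zero.2 (by omega)
  -- part 1
  have h1 : ∀ b : Fin p × Fin (p / d), esGram p d k hdvd T b b = 1 := by
    intro b
    ext j j'
    rw [esGram_apply p d k hp0 hdvd]
    by_cases hjj : j = j'
    · subst hjj
      rw [Matrix.one_apply_eq]
      have he : (Finset.univ.filter (fun i : Fin k =>
          T (rowIdx p d hdvd b.2 j) b.1 i = T (rowIdx p d hdvd b.2 j) b.1 i))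
          = Finset.univ := by simp
      rw [he, Finset.card_univ, Fintype.card_fin]
      field_simp
    · rw [Matrix.one_apply_ne hjj]
      have hrne : rowIdx p d hdvd b.2 j ≠ rowIdx p d hdvd b.2 j' :=
        fun h => hjj (rowIdx_injective p d hdvd h).2
      rw [card_filter_none (fun i => hcol _ _ b.1 hrne i)]
      simp
  -- part 2
  have h2 : ∀ (c : Fin p) (g g' : Fin (p / d)), g ≠ g' →
      esGram p d k hdvd T (c, g) (c, g') = 0 := by
    intro c g g' hgg
    ext j j'
    rw [esGram_apply p d k hp0 hdvd]
    have hrne : rowIdx p d hdvd g j ≠ rowIdx p d hdvd g' j' :=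
      fun h => hgg (rowIdx_injective p d hdvd h).1
    rw [card_filter_none (fun i => hcol _ _ c hrne i)]
    simp
  -- part 3
  have h3 : ∀ (c c' : Fin p) (g : Fin (p / d)), c ≠ c' →
      esGram p d k hdvd T (c, g) (c', g) =
        Matrix.of fun j j' => if j = j' then 0 else 1 / (k : ℝ) := by
    intro c c' g hcc
    ext j j'
    rw [esGram_apply p d k hp0 hdvd]
    simp only [Matrix.of_apply]
    by_cases hjj : j = j'
    · subst hjj
      rw [if_pos rfl, card_filter_none (fun i => hrow _ _ _ hcc i)]
      simp
    · rw [if_neg hjj]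
      have hrne : rowIdx p d hdvd g j ≠ rowIdx p d hdvd g j' :=
        fun h => hjj (rowIdx_injective p d hdvd h).2
      rw [card_filter_one (hcross _ _ _ _ hrne hcc)]
      simp
  -- part 4
  have h4 : ∀ (c c' : Fin p) (g g' : Fin (p / d)), c ≠ c' → g ≠ g' →
      esGram p d k hdvd T (c, g) (c', g') = Matrix.of fun _ _ => 1 / (k : ℝ) := by
    intro c c' g g' hcc hgg
    ext j j'
    rw [esGram_apply p d k hp0 hdvd]
    simp only [Matrix.of_apply]
    have hrne : rowIdx p d hdvd g j ≠ rowIdx p d hdvd g' j' :=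
      fun h => hgg (rowIdx_injective p d hdvd h).1
    rw [card_filter_one (hcross _ _ _ _ hrne hcc)]
    simp
  refine ⟨h1, h2, h3, h4, ?_, ?_⟩
  · rintro ⟨c, g⟩ ⟨c', g'⟩ hbb x
    set S := ∑ j', x j' with hS
    set Tt := ∑ j, x j ^ 2 with hT
    have hTnn : 0 ≤ Tt := Finset.sum_nonneg fun j _ => sq_nonneg _
    have hdk : (0 : ℝ) ≤ (d : ℝ) / k := by positivity
    have hCS : S ^ 2 ≤ (d : ℝ) * Tt := by
      have := sq_sum_le_card_mul_sum_sq (s := (Finset.univ : Finset (Fin d))) (f := x)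
      simpa [Finset.card_univ] using this
    have hd1 : (1 : ℝ) ≤ (d : ℝ) := by exact_mod_cast hd0
    have hkpos : (0 : ℝ) < (k : ℝ) := by exact_mod_cast hk0
    by_cases hcc : c = c'
    · subst hcc
      have hgg : g ≠ g' := by
        intro h; exact hbb (by rw [h])
      rw [h2 c g g' hgg]
      simp only [Matrix.zero_mulVec, Pi.zero_apply]
      have : ∑ j : Fin d, ((0:ℝ)) ^ 2 = 0 := by simp
      rw [this, Real.sqrt_zero]
      positivity
    · by_cases hgg : g = g'
      · subst hgg
        rw [h3 c c' g hcc]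
        have hmv : ∀ j : Fin d,
            (Matrix.of fun j j' : Fin d => if j = j' then (0:ℝ) else 1 / (k:ℝ)).mulVec x j
              = (S - x j) / k := by
          intro j
          simp only [Matrix.mulVec, dotProduct, Matrix.of_apply]
          have step : ∀ j' : Fin d, (if j = j' then (0:ℝ) else 1/(k:ℝ)) * x j'
              = (1/(k:ℝ)) * x j' - (if j' = j then (1/(k:ℝ)) * x j' else 0) := by
            intro j'
            by_cases h : j = j'
            · simp [h]
            · simp [h, Ne.symm h]
          rw [Finset.sum_congr rfl fun j' _ => step j']
          rw [Finset.sum_sub_distrib, ← Finset.mul_sum,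
            Finset.sum_ite_eq' Finset.univ j (fun j' => (1/(k:ℝ)) * x j')]
          simp only [Finset.mem_univ, if_true, ← hS]
          ring
        simp only [hmv]
        apply sqrt_bound_helper hdk
        have hstep1 : ∑ j : Fin d, ((S - x j)/(k:ℝ))^2
            = (∑ j : Fin d, (S - x j)^2)/(k:ℝ)^2 := by
          rw [Finset.sum_div]
          exact Finset.sum_congr rfl fun j _ => by rw [div_pow]
        have hexp : ∑ j : Fin d, (S - x j)^2 = (d:ℝ)*S^2 - 2*S*S + Tt := by
          have hj : ∀ j : Fin d, (S - x j)^2 = S^2 - 2*S*x j + x j^2 := fun j => by ring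
          rw [Finset.sum_congr rfl fun j _ => hj j]
          rw [Finset.sum_add_distrib, Finset.sum_sub_distrib, Finset.sum_const, ← Finset.mul_sum,
            Finset.card_univ, Fintype.card_fin, nsmul_eq_mul, ← hS, ← hT]
        rw [hstep1, hexp]
        have hfin : (d:ℝ)*S^2 - 2*S*S + Tt ≤ (d:ℝ)^2 * Tt := by
          nlinarith [mul_nonneg (sub_nonneg.2 hCS) (sub_nonneg.2 hd1), sq_nonneg S,
            mul_nonneg (sub_nonneg.2 hd1) hTnn]
        calc ((d:ℝ)*S^2 - 2*S*S + Tt)/(k:ℝ)^2 ≤ ((d:ℝ)^2 * Tt)/(k:ℝ)^2 := by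
              apply div_le_div_of_nonneg_right hfin (by positivity)
          _ = ((d:ℝ)/(k:ℝ))^2 * Tt := by rw [div_pow]; ring
      · rw [h4 c c' g g' hcc hgg]
        have hmv : ∀ j : Fin d,
            (Matrix.of fun _ _ : Fin d => (1:ℝ) / (k:ℝ)).mulVec x j = S / k := by
          intro j
          simp only [Matrix.mulVec, dotProduct, Matrix.of_apply]
          rw [← Finset.mul_sum, ← hS]
          ring
        simp only [hmv]
        apply sqrt_bound_helper hdk
        rw [Finset.sum_const, Finset.card_univ, Fintype.card_fin, nsmul_eq_mul]
        have hfin : (d:ℝ) * S^2 ≤ (d:ℝ)^2 * Tt := by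
          nlinarith [mul_le_mul_of_nonneg_left hCS (by positivity : (0:ℝ) ≤ (d:ℝ))]
        calc (d:ℝ) * (S/(k:ℝ))^2 = ((d:ℝ)*S^2)/(k:ℝ)^2 := by rw [div_pow]; ring
          _ ≤ ((d:ℝ)^2 * Tt)/(k:ℝ)^2 := by
              apply div_le_div_of_nonneg_right hfin (by positivity)
          _ = ((d:ℝ)/(k:ℝ))^2 * Tt := by rw [div_pow]; ring
  · have hdp : d < p := by omega
    have hpd2 : 2 ≤ p / d := by
      obtain ⟨m, hm⟩ := hdvd
      rw [hm, Nat.mul_div_cancel_left m hd0]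
      rcases m with _ | _ | m
      · simp at hm; omega
      · simp at hm; omega
      · omega
    have hcne : (⟨0, by omega⟩ : Fin p) ≠ ⟨1, by omega⟩ := by simp [Fin.ext_iff]
    have hgne : (⟨0, by omega⟩ : Fin (p/d)) ≠ ⟨1, by omega⟩ := by simp [Fin.ext_iff]
    refine ⟨(⟨0, by omega⟩, ⟨0, by omega⟩), (⟨1, by omega⟩, ⟨1, by omega⟩), ?_,
      fun _ => 1, ?_, ?_⟩
    · intro h
      exact hcne (congrArg Prod.fst h)
    · intro h
      have := congrFun h ⟨0, hd0⟩
      simp at this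
    · rw [h4 _ _ _ _ hcne hgne]
      funext j
      simp only [Matrix.mulVec, dotProduct, Matrix.of_apply, mul_one,
        Finset.sum_const, Finset.card_univ, Fintype.card_fin, nsmul_eq_mul, Pi.smul_apply,
        smul_eq_mul]
      ring
end

section
/- Let Φ₀ = (1/√k)Φ(n,k,t) be the normalized GES matrix (binary matrix with k ones per column, pairwise column overlap at most t). Then Φ₀ satisfies RIP of order k' with constant δ_{k'} = t(k'−1)/k for any k' < k/t + 1; in particular δ_{k'} < 1. -/
/-- The normalized GES matrix `Φ₀ = (1/√k)Φ(n,k,t)` (binary, `k` ones per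
column, pairwise column overlap at most `t`) satisfies RIP of order `k'` with constant
`δ_{k'} = t(k'−1)/k` for any `k' < k/t + 1`; in particular `δ_{k'} < 1`. -/
theorem ges_matrix_rip
    (n k t : ℕ) (hk : 0 < k) (ht : 0 < t)
    (Φ : Matrix (Fin (n * k)) (Fin (n ^ (t + 1))) ℝ)
    (hbin : ∀ i j, Φ i j = 0 ∨ Φ i j = 1)
    (hcols : ∀ j, (Finset.univ.filter (fun i => Φ i j = 1)).card = k)
    (hover : ∀ j j', j ≠ j' →
      (Finset.univ.filter (fun i => Φ i j = 1 ∧ Φ i j' = 1)).card ≤ t)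
    (k' : ℕ) (hk' : (k' : ℝ) < (k : ℝ) / t + 1) :
    (t : ℝ) * ((k' : ℝ) - 1) / k < 1 ∧
      ∀ x : Fin (n ^ (t + 1)) → ℝ,
        (Finset.univ.filter (fun j => x j ≠ 0)).card ≤ k' →
        (1 - (t : ℝ) * ((k' : ℝ) - 1) / k) * (∑ j, x j ^ 2) ≤
            ∑ i, (((1 / Real.sqrt k) • Φ).mulVec x i) ^ 2 ∧
          ∑ i, (((1 / Real.sqrt k) • Φ).mulVec x i) ^ 2 ≤
            (1 + (t : ℝ) * ((k' : ℝ) - 1) / k) * (∑ j, x j ^ 2) := by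
  have hkR : (0:ℝ) < k := by exact_mod_cast hk
  have htR : (0:ℝ) < t := by exact_mod_cast ht
  have hδ1 : (t : ℝ) * ((k' : ℝ) - 1) / k < 1 := by
    rw [div_lt_one hkR]
    have h1 : (k':ℝ) - 1 < (k:ℝ)/t := by linarith
    calc (t:ℝ) * ((k':ℝ)-1) < t * ((k:ℝ)/t) := mul_lt_mul_of_pos_left h1 htR
    _ = k := by field_simp
  refine ⟨hδ1, fun x hx => ?_⟩
  -- column inner products
  have hc : ∀ j j', ∑ i, Φ i j * Φ i j'
      = ((Finset.univ.filter (fun i => Φ i j = 1 ∧ Φ i j' = 1)).card : ℝ) := by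
    intro j j'
    rw [Finset.card_filter]
    push_cast
    refine Finset.sum_congr rfl fun i _ => ?_
    rcases hbin i j with h1 | h1 <;> rcases hbin i j' with h2 | h2 <;>
      simp [h1, h2]
  have hcd : ∀ j, ∑ i, Φ i j * Φ i j = (k:ℝ) := by
    intro j
    rw [hc]
    norm_cast
    rw [Finset.filter_congr (fun i _ => by simp : ∀ i ∈ Finset.univ,
      (Φ i j = 1 ∧ Φ i j = 1) ↔ Φ i j = 1)]
    exact hcols j
  have hco : ∀ j j', j ≠ j' → |∑ i, Φ i j * Φ i j'| ≤ (t:ℝ) := by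
    intro j j' h
    rw [hc, abs_of_nonneg (by positivity)]
    exact_mod_cast hover j j' h
  -- expansion
  have hexp : ∑ i, (Φ.mulVec x i)^2
      = ∑ j, ∑ j', (x j * x j') * ∑ i, Φ i j * Φ i j' := by
    have h1 : ∀ i, (Φ.mulVec x i)^2
        = ∑ j, ∑ j', (x j * x j') * (Φ i j * Φ i j') := by
      intro i
      rw [Matrix.mulVec, dotProduct, sq, Finset.sum_mul_sum]
      exact Finset.sum_congr rfl fun j _ =>
        Finset.sum_congr rfl fun j' _ => by ring
    simp_rw [h1]
    rw [Finset.sum_comm]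
    refine Finset.sum_congr rfl fun j _ => ?_
    rw [Finset.sum_comm]
    refine Finset.sum_congr rfl fun j' _ => ?_
    rw [Finset.mul_sum]
  set D : ℝ := ∑ j, x j ^ 2 with hD
  have hDnn : 0 ≤ D := Finset.sum_nonneg fun j _ => sq_nonneg _
  set T : ℝ := ∑ j, |x j| with hT
  -- split diagonal
  have hsplit : ∑ j, ∑ j', (x j * x j') * ∑ i, Φ i j * Φ i j'
      = (k:ℝ) * D +
        ∑ j, ∑ j' ∈ Finset.univ.erase j, (x j * x j') * ∑ i, Φ i j * Φ i j' := by
    rw [hD, Finset.mul_sum, ← Finset.sum_add_distrib]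
    refine Finset.sum_congr rfl fun j _ => ?_
    rw [← Finset.add_sum_erase _ _ (Finset.mem_univ j), hcd j]
    ring_nf
  set O : ℝ := ∑ j, ∑ j' ∈ Finset.univ.erase j, (x j * x j') * ∑ i, Φ i j * Φ i j'
    with hO
  -- bound off-diagonal
  have habs : |O| ≤ (t:ℝ) * (T^2 - D) := by
    have h2 : |O| ≤ ∑ j, ∑ j' ∈ Finset.univ.erase j, |x j| * |x j'| * t := by
      refine (Finset.abs_sum_le_sum_abs _ _).trans ?_
      refine Finset.sum_le_sum fun j _ => ?_
      refine (Finset.abs_sum_le_sum_abs _ _).trans ?_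
      refine Finset.sum_le_sum fun j' hj' => ?_
      rw [abs_mul, abs_mul]
      exact mul_le_mul_of_nonneg_left
        (hco j j' (fun h => (Finset.mem_erase.mp hj').1 h.symm))
        (by positivity)
    have h3 : ∑ j, ∑ j' ∈ Finset.univ.erase j, |x j| * |x j'| * t
        = (t:ℝ) * (T^2 - D) := by
      have h4 : ∀ j : Fin (n ^ (t+1)),
          ∑ j' ∈ Finset.univ.erase j, |x j| * |x j'| * t
            = (t:ℝ) * (|x j| * (T - |x j|)) := by
        intro j
        have : ∑ j' ∈ Finset.univ.erase j, |x j'| = T - |x j| := by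
          rw [hT, ← Finset.add_sum_erase _ _ (Finset.mem_univ j)]; ring
        rw [← this, Finset.mul_sum, Finset.mul_sum]
        exact Finset.sum_congr rfl fun j' _ => by ring
      simp_rw [h4]
      rw [← Finset.mul_sum]
      congr 1
      have : ∑ j, |x j| * (T - |x j|) = T * T - ∑ j, |x j| * |x j| := by
        simp_rw [mul_sub]
        rw [Finset.sum_sub_distrib, ← Finset.sum_mul]
      rw [this, hD, hT]
      have : ∀ j : Fin (n ^ (t+1)), |x j| * |x j| = x j ^ 2 := fun j => by
        rw [← abs_mul, ← sq, abs_sq]  -- |x|*|x| = x^2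
      simp_rw [this]
      ring
    exact h2.trans (le_of_eq h3)
  -- Cauchy-Schwarz: T^2 ≤ k' * D
  have hCS : T^2 ≤ (k':ℝ) * D := by
    set S := Finset.univ.filter (fun j => x j ≠ 0) with hSdef
    have hTS : T = ∑ j ∈ S, |x j| := by
      rw [hT]
      refine (Finset.sum_filter_of_ne fun j _ h => ?_).symm
      intro hxj; rw [hxj] at h; simp at h
    have hDS : D = ∑ j ∈ S, x j ^ 2 := by
      rw [hD]
      refine (Finset.sum_filter_of_ne fun j _ h => ?_).symm
      intro hxj; rw [hxj] at h; simp at h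
    have hcs : (∑ j ∈ S, |x j|)^2 ≤ (S.card : ℝ) * ∑ j ∈ S, |x j| ^ 2 :=
      sq_sum_le_card_mul_sum_sq
    have hsq' : ∀ j, |x j| ^ 2 = x j ^ 2 := fun j => sq_abs _
    simp_rw [hsq'] at hcs
    rw [hTS, hDS]
    refine hcs.trans ?_
    have hcard : (S.card : ℝ) ≤ (k' : ℝ) := by exact_mod_cast hx
    have hsnn : 0 ≤ ∑ j ∈ S, x j ^ 2 := Finset.sum_nonneg fun j _ => sq_nonneg _
    exact mul_le_mul_of_nonneg_right hcard hsnn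
  have hObound : |O| ≤ (t:ℝ) * (((k':ℝ) - 1) * D) := by
    refine habs.trans ?_
    have : T^2 - D ≤ ((k':ℝ) - 1) * D := by nlinarith
    nlinarith
  -- finish
  have hmv : ∀ i, ((1 / Real.sqrt k) • Φ).mulVec x i = (1 / Real.sqrt k) * Φ.mulVec x i := by
    intro i
    rw [Matrix.smul_mulVec]
    rfl
  have hsq : (1 / Real.sqrt k)^2 = 1 / (k:ℝ) := by
    rw [div_pow, one_pow, Real.sq_sqrt hkR.le]
  have hnorm : ∑ i, (((1 / Real.sqrt k) • Φ).mulVec x i) ^ 2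
      = (1/(k:ℝ)) * ((k:ℝ) * D + O) := by
    simp_rw [hmv, mul_pow, hsq]
    rw [← Finset.mul_sum, hexp, hsplit]
  rw [hnorm]
  rw [abs_le] at hObound
  constructor
  · have e1 : (1 - (t:ℝ) * ((k':ℝ) - 1) / k) * D
        = ((k:ℝ)*D - (t:ℝ)*(((k':ℝ)-1)*D))/k := by field_simp
    have e2 : (1:ℝ)/(k:ℝ) * ((k:ℝ)*D + O) = ((k:ℝ)*D + O)/k := by ring
    rw [e1, e2]
    exact (div_le_div_iff_of_pos_right hkR).mpr (by linarith [hObound.1])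
  · have e1 : (1 + (t:ℝ) * ((k':ℝ) - 1) / k) * D
        = ((k:ℝ)*D + (t:ℝ)*(((k':ℝ)-1)*D))/k := by field_simp
    have e2 : (1:ℝ)/(k:ℝ) * ((k:ℝ)*D + O) = ((k:ℝ)*D + O)/k := by ring
    rw [e1, e2]
    exact (div_le_div_iff_of_pos_right hkR).mpr (by linarith [hObound.2])
end
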